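/- Let C be a linear code in F_q^N with dual code C^⊥. Then the Hamming weight enumerators satisfy W_{C^⊥}(X,Y) = (1/|C|) · W_C(X + (q-1)Y, X - Y). -/

import Mathlib

open Finset
open scoped Classical BigOperators

variable {Fq : Type} [Field Fq] [Fintype Fq]

noncomputable def wt {N : ℕ} (c : Fin N → Fq) : ℕ := (Finset.univ.filter fun j => c j ≠ 0).card

def dualCode {N : ℕ} (C : Submodule Fq (Fin N → Fq)) : Submodule Fq (Fin N → Fq) where
  carrier := {v | ∀ u ∈ C, ∑ j, u j * v j = 0}
  add_mem' := by
    intro a b ha hb u hu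
    have h1 := ha u hu
    have h2 := hb u hu
    have : ∀ j, u j * (a + b) j = u j * a j + u j * b j := fun j => by
      simp [Pi.add_apply, mul_add]
    simp only [Set.mem_setOf_eq, this, Finset.sum_add_distrib, h1, h2, add_zero]
  zero_mem' := by intro u hu; simp
  smul_mem' := by
    intro r v hv u hu
    have h := hv u hu
    have : ∀ j, u j * (r • v) j = r * (u j * v j) := fun j => by
      simp [Pi.smul_apply, smul_eq_mul]; ring
    simp only [Set.mem_setOf_eq, this, ← Finset.mul_sum, h, mul_zero]

noncomputable def W {N : ℕ} (C : Submodule Fq (Fin N → Fq)) (X Y : ℂ) : ℂ :=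
  ∑ c : C, X ^ (N - wt (c : Fin N → Fq)) * Y ^ wt (c : Fin N → Fq)

noncomputable def effLen {N m : ℕ} (c : Fin m → Fin N → Fq) : ℕ :=
  (Finset.univ.filter fun j => ∃ i, c i j ≠ 0).card

noncomputable def Wm {N m : ℕ} (Cs : Fin m → Submodule Fq (Fin N → Fq)) (X Y : ℂ) : ℂ :=
  ∑ c : (Π i, Cs i), X ^ (N - effLen fun i => (c i : Fin N → Fq)) *
    Y ^ effLen (fun i => (c i : Fin N → Fq))

noncomputable def suppWt {N : ℕ} (V : Submodule Fq (Fin N → Fq)) : ℕ :=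
  (Finset.univ.filter fun j => ∃ v ∈ V, v j ≠ 0).card

noncomputable def Wr {N : ℕ} (C : Submodule Fq (Fin N → Fq)) (r : ℕ) (X Y : ℂ) : ℂ :=
  ∑ᶠ D ∈ {D : Submodule Fq (Fin N → Fq) | D ≤ C ∧ Module.finrank Fq D = r},
    X ^ (N - suppWt D) * Y ^ suppWt D

set_option linter.unusedSectionVars false

private lemma prod_ite_wt {N : ℕ} (c : Fin N → Fq) (A B : ℂ) :
    (∏ j, (if c j = 0 then A else B)) = A ^ (N - wt c) * B ^ wt c := by
  rw [Finset.prod_ite, Finset.prod_const, Finset.prod_const]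
  have h := Finset.card_filter_add_card_filter_not
    (s := (Finset.univ : Finset (Fin N))) (p := fun j => c j = 0)
  have hc : (Finset.univ.filter fun j => ¬ c j = 0).card = wt c := rfl
  rw [hc, Finset.card_univ, Fintype.card_fin] at h
  congr 2
  omega

private lemma addchar_map_sum {A M : Type*} [AddCommMonoid A] [CommMonoid M]
    (ψ : AddChar A M) {ι : Type*} (s : Finset ι) (f : ι → A) :
    ψ (∑ i ∈ s, f i) = ∏ i ∈ s, ψ (f i) := by
  induction s using Finset.induction with
  | empty => simp
  | insert _ _ h ih => rw [Finset.sum_insert h, Finset.prod_insert h, AddChar.map_add_eq_mul, ih]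

private lemma char_sum_code {N : ℕ} (ψ : AddChar Fq ℂ) (hψ : ψ.IsPrimitive)
    (C : Submodule Fq (Fin N → Fq)) (v : Fin N → Fq) :
    ∑ u : C, ψ (∑ j, (u : Fin N → Fq) j * v j) =
      if v ∈ dualCode C then (Nat.card C : ℂ) else 0 := by
  split_ifs with h
  · have hv : ∀ u : C, ψ (∑ j, (u : Fin N → Fq) j * v j) = 1 := by
      intro u
      have : ∑ j, (u : Fin N → Fq) j * v j = 0 := h u u.2
      rw [this, AddChar.map_zero_eq_one]
    simp [hv, Nat.card_eq_fintype_card]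
  · have h' : ∃ u ∈ C, ∑ j, u j * v j ≠ 0 := by
      by_contra hc
      push_neg at hc
      exact h hc
    obtain ⟨u₀, hu₀, hs⟩ := h'
    set φ : C →+ Fq :=
      { toFun := fun u => ∑ j, (u : Fin N → Fq) j * v j
        map_zero' := by simp
        map_add' := by
          intro a b
          simp [add_mul, Finset.sum_add_distrib]
      } with hφ
    have hne : ψ ≠ 1 := by
      intro hcontra
      exact hψ (one_ne_zero (α := Fq)) (by rw [hcontra, AddChar.mulShift_one])
    obtain ⟨b, hb⟩ := AddChar.ne_one_iff.1 hne
    set s := ∑ j, u₀ j * v j with hsdef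
    have hχ : ψ.compAddMonoidHom φ ≠ 1 := by
      intro hcontra
      apply hb
      set w : C := (b * s⁻¹) • (⟨u₀, hu₀⟩ : C) with hwdef
      have hw : φ w = b := by
        simp only [hφ, hwdef, AddMonoidHom.coe_mk, ZeroHom.coe_mk, SetLike.val_smul,
          Pi.smul_apply, smul_eq_mul]
        have hj : ∀ j ∈ Finset.univ, b * s⁻¹ * u₀ j * v j = b * s⁻¹ * (u₀ j * v j) :=
          fun j _ => by ring
        rw [Finset.sum_congr rfl hj, ← Finset.mul_sum, ← hsdef, mul_assoc,
          inv_mul_cancel₀ hs, mul_one]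
      have h2 : ψ.compAddMonoidHom φ w = 1 := by rw [hcontra]; rfl
      rw [AddChar.compAddMonoidHom_apply, hw] at h2
      exact h2
    have := AddChar.sum_eq_zero_of_ne_one hχ
    exact this

private lemma coord_sum (ψ : AddChar Fq ℂ) (hψ : ψ.IsPrimitive) (X Y : ℂ) (a : Fq) :
    ∑ t : Fq, ψ (a * t) * (if t = 0 then X else Y) =
      if a = 0 then X + ((Fintype.card Fq : ℂ) - 1) * Y else X - Y := by
  have key : ∑ t : Fq, ψ (a * t) = if a = 0 then (Fintype.card Fq : ℂ) else 0 := by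
    simp_rw [mul_comm a]
    have := AddChar.sum_mulShift a hψ
    split_ifs at this ⊢ <;> exact_mod_cast this
  have h1 : ∀ t : Fq, ψ (a * t) * (if t = 0 then X else Y) =
      ψ (a * t) * Y + (if t = 0 then X - Y else 0) := by
    intro t
    by_cases ht : t = 0
    · rw [ht, if_pos rfl, if_pos rfl, mul_zero, AddChar.map_zero_eq_one, one_mul, one_mul]; ring
    · rw [if_neg ht, if_neg ht, add_zero]
  rw [Finset.sum_congr rfl fun t _ => h1 t, Finset.sum_add_distrib, ← Finset.sum_mul, key,
    Finset.sum_ite_eq' Finset.univ (0 : Fq) (fun _ => X - Y), if_pos (Finset.mem_univ _)]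
  split_ifs with ha <;> ring

theorem macwilliams_identity {N : ℕ} (C : Submodule Fq (Fin N → Fq)) (X Y : ℂ) :
    W (dualCode C) X Y =
      (Nat.card C : ℂ)⁻¹ * W C (X + ((Fintype.card Fq : ℂ) - 1) * Y) (X - Y) := by
  set ψ := AddChar.FiniteField.primitiveChar_to_Complex Fq with hψdef
  have hψ : ψ.IsPrimitive := AddChar.FiniteField.primitiveChar_to_Complex_isPrimitive Fq
  set k : ℂ := (Nat.card C : ℂ) with hk
  have hk0 : k ≠ 0 := Nat.cast_ne_zero.mpr Nat.card_pos.ne'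
  have hWd : W (dualCode C) X Y =
      ∑ v ∈ Finset.univ.filter (fun v => v ∈ dualCode C), X ^ (N - wt v) * Y ^ wt v := by
    rw [W]
    exact (Finset.sum_subtype (p := fun v : Fin N → Fq => v ∈ dualCode C)
      (Finset.univ.filter fun v => v ∈ dualCode C)
      (fun x => by simp) (fun v => X ^ (N - wt v) * Y ^ wt v)).symm
  have step1 : ∑ v : Fin N → Fq, (∑ u : C, ψ (∑ j, (u : Fin N → Fq) j * v j)) *
      (X ^ (N - wt v) * Y ^ wt v) = k * W (dualCode C) X Y := by
    rw [Finset.sum_congr rfl fun v _ => by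
      rw [char_sum_code ψ hψ C v, ite_mul, zero_mul]]
    rw [← Finset.sum_filter, ← Finset.mul_sum, hWd]
  have step2 : ∑ v : Fin N → Fq, (∑ u : C, ψ (∑ j, (u : Fin N → Fq) j * v j)) *
      (X ^ (N - wt v) * Y ^ wt v) =
      W C (X + ((Fintype.card Fq : ℂ) - 1) * Y) (X - Y) := by
    rw [Finset.sum_congr rfl fun v _ => Finset.sum_mul _ _ _, Finset.sum_comm, W]
    refine Finset.sum_congr rfl fun u _ => ?_
    have hterm : ∀ v : Fin N → Fq,
        ψ (∑ j, (u : Fin N → Fq) j * v j) * (X ^ (N - wt v) * Y ^ wt v)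
          = ∏ j, (ψ ((u : Fin N → Fq) j * v j) * (if v j = 0 then X else Y)) := by
      intro v
      rw [← prod_ite_wt v X Y, addchar_map_sum, ← Finset.prod_mul_distrib]
    rw [Finset.sum_congr rfl fun v _ => hterm v]
    rw [← Fintype.piFinset_univ, Finset.sum_prod_piFinset Finset.univ
      (fun j t => ψ ((u : Fin N → Fq) j * t) * (if t = 0 then X else Y))]
    rw [Finset.prod_congr rfl fun j _ => coord_sum ψ hψ X Y ((u : Fin N → Fq) j)]
    exact prod_ite_wt (u : Fin N → Fq) _ _
  rw [← step2, step1, inv_mul_cancel_left₀ hk0]
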